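/- If a_{1,1} > a_{2,1} and a_{1,2} > a_{2,2} (species 1 is a cheater) then in the two-type mean-field model du/dt = h(u), h(u) > 0 for all u in (0,1), hence every solution with u(0) in (0,1) converges to 1. -/

import Mathlib

noncomputable def twoTypeH (a11 a12 a21 a22 : ℝ) (u : ℝ) : ℝ :=
  (a12 / (a12 * u + a22 * (1 - u)) - a21 / (a11 * u + a21 * (1 - u))) * u * (1 - u)

lemma twoTypeH_eq' {a11 a12 a21 a22 : ℝ} (u : ℝ) (h1 : a12 * u + a22 * (1 - u) ≠ 0)
    (h2 : a11 * u + a21 * (1 - u) ≠ 0) :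
    twoTypeH a11 a12 a21 a22 u =
      ((a12 * (a11 * u + a21 * (1 - u)) - a21 * (a12 * u + a22 * (1 - u))) * (u * (1 - u))) /
        ((a12 * u + a22 * (1 - u)) * (a11 * u + a21 * (1 - u))) := by
  unfold twoTypeH
  rw [div_sub_div _ _ h1 h2]
  ring

theorem cheater_wins
    (a11 a12 a21 a22 : ℝ)
    (h11 : 0 < a11) (h12 : 0 < a12) (h21 : 0 < a21) (h22 : 0 < a22)
    (hch1 : a21 < a11) (hch2 : a22 < a12) :
    (∀ u ∈ Set.Ioo (0 : ℝ) 1, 0 < twoTypeH a11 a12 a21 a22 u) ∧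
    (∀ y : ℝ → ℝ,
      (∀ t, 0 ≤ t → HasDerivAt y (twoTypeH a11 a12 a21 a22 (y t)) t) →
      y 0 ∈ Set.Ioo (0 : ℝ) 1 →
      Filter.Tendsto y Filter.atTop (nhds 1)) := by
  have hD1 : ∀ u : ℝ, 0 ≤ u → 0 < a12 * u + a22 * (1 - u) := fun u hu => by
    nlinarith [mul_nonneg (sub_pos.2 hch2).le hu]
  have hD2 : ∀ u : ℝ, 0 ≤ u → 0 < a11 * u + a21 * (1 - u) := fun u hu => by
    nlinarith [mul_nonneg (sub_pos.2 hch1).le hu]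
  set N : ℝ → ℝ := fun u =>
    a12 * (a11 * u + a21 * (1 - u)) - a21 * (a12 * u + a22 * (1 - u)) with hNdef
  have hHeq : ∀ u : ℝ, 0 ≤ u → twoTypeH a11 a12 a21 a22 u
      = (N u * (u * (1 - u))) / ((a12 * u + a22 * (1 - u)) * (a11 * u + a21 * (1 - u))) :=
    fun u hu => twoTypeH_eq' u (hD1 u hu).ne' (hD2 u hu).ne'
  have hNpos : ∀ u : ℝ, 0 < u → u ≤ 1 → 0 < N u := by
    intro u hu hu1
    show 0 < a12 * (a11 * u + a21 * (1 - u)) - a21 * (a12 * u + a22 * (1 - u))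
    nlinarith [mul_pos (mul_pos h12 (sub_pos.2 hch1)) hu,
      mul_nonneg (mul_pos h21 (sub_pos.2 hch2)).le (sub_nonneg.2 hu1)]
  have hpos : ∀ u ∈ Set.Ioo (0:ℝ) 1, 0 < twoTypeH a11 a12 a21 a22 u := by
    intro u hu
    rw [hHeq u hu.1.le]
    exact div_pos (mul_pos (hNpos u hu.1 hu.2.le)
      (mul_pos hu.1 (by linarith [hu.2]))) (mul_pos (hD1 u hu.1.le) (hD2 u hu.1.le))
  have hnonneg : ∀ u ∈ Set.Ioc (0:ℝ) 1, 0 ≤ twoTypeH a11 a12 a21 a22 u := by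
    intro u hu
    rcases lt_or_eq_of_le hu.2 with h | h
    · exact (hpos u ⟨hu.1, h⟩).le
    · rw [hHeq u hu.1.le, h]
      simp
  refine ⟨hpos, ?_⟩
  -- a small interval above 1 where the drift is nonpositive
  set ε : ℝ := a12 * (a11 - a21) / (a12 * (a11 - a21) + a21 * (a12 - a22)) with hεdef
  have hc1p : 0 < a12 * (a11 - a21) := mul_pos h12 (sub_pos.2 hch1)
  have hc2p : 0 < a21 * (a12 - a22) := mul_pos h21 (sub_pos.2 hch2)
  have hεpos : 0 < ε := div_pos hc1p (by linarith)
  have hNpos' : ∀ u : ℝ, 1 ≤ u → u ≤ 1 + ε → 0 < N u := by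
    intro u h1 h2
    rw [hεdef] at h2
    have key : N u = a21 * (a12 - a22)
        + (a12 * (a11 - a21) - a21 * (a12 - a22)) * u := by rw [hNdef]; ring
    set c1 := a12 * (a11 - a21) with hc1
    set c2 := a21 * (a12 - a22) with hc2
    rw [key]
    rcases le_total c2 c1 with h | h
    · nlinarith
    · have := (le_div_iff₀ (by positivity : (0:ℝ) < c1 + c2)).1
        (by linarith : u - 1 ≤ c1 / (c1 + c2))
      nlinarith
  have hneg : ∀ u : ℝ, 1 < u → u ≤ 1 + ε → twoTypeH a11 a12 a21 a22 u ≤ 0 := by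
    intro u h1 h2
    have hu0 : (0:ℝ) ≤ u := by linarith
    rw [hHeq u hu0]
    apply div_nonpos_of_nonpos_of_nonneg
    · exact mul_nonpos_of_nonneg_of_nonpos (hNpos' u h1.le h2).le
        (mul_nonpos_of_nonneg_of_nonpos (by linarith) (by linarith))
    · exact (mul_pos (hD1 u hu0) (hD2 u hu0)).le
  intro y hy hy0
  have hyc : ∀ t : ℝ, 0 ≤ t → ContinuousAt y t := fun t ht => (hy t ht).continuousAt
  -- monotonicity helpers
  have hmono : ∀ a b : ℝ, 0 ≤ a →
      (∀ t ∈ Set.Ioo a b, 0 ≤ twoTypeH a11 a12 a21 a22 (y t)) →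
      MonotoneOn y (Set.Icc a b) := by
    intro a b ha hgood
    apply monotoneOn_of_deriv_nonneg (convex_Icc a b)
    · exact fun t ht => ((hyc t (ha.trans ht.1)).continuousWithinAt)
    · intro t ht
      rw [interior_Icc] at ht
      exact ((hy t (ha.trans ht.1.le)).differentiableAt).differentiableWithinAt
    · intro t ht
      rw [interior_Icc] at ht
      rw [(hy t (ha.trans ht.1.le)).deriv]
      exact hgood t ht
  have hanti : ∀ a b : ℝ, 0 ≤ a →
      (∀ t ∈ Set.Ioo a b, twoTypeH a11 a12 a21 a22 (y t) ≤ 0) →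
      AntitoneOn y (Set.Icc a b) := by
    intro a b ha hgood
    apply antitoneOn_of_deriv_nonpos (convex_Icc a b)
    · exact fun t ht => ((hyc t (ha.trans ht.1)).continuousWithinAt)
    · intro t ht
      rw [interior_Icc] at ht
      exact ((hy t (ha.trans ht.1.le)).differentiableAt).differentiableWithinAt
    · intro t ht
      rw [interior_Icc] at ht
      rw [(hy t (ha.trans ht.1.le)).deriv]
      exact hgood t ht
  -- invariance of (0,1]
  have hinv : ∀ t : ℝ, 0 ≤ t → y t ∈ Set.Ioc (0:ℝ) 1 := by
    by_contra hbad
    push_neg at hbad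
    obtain ⟨tb, htb0, htb⟩ := hbad
    set B : Set ℝ := {t | 0 ≤ t ∧ y t ∉ Set.Ioc (0:ℝ) 1} with hB
    have hBne : B.Nonempty := ⟨tb, htb0, htb⟩
    have hBbdd : BddBelow B := ⟨0, fun t ht => ht.1⟩
    set t₀ := sInf B with ht₀
    obtain ⟨δ₀, hδ₀, hgood0⟩ : ∃ δ > 0, ∀ ⦃t : ℝ⦄, dist t 0 < δ → y t ∈ Set.Ioo (0:ℝ) 1 :=
      Metric.eventually_nhds_iff.1 ((hyc 0 le_rfl).eventually_mem (isOpen_Ioo.mem_nhds hy0))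
    have ht₀pos : 0 < t₀ := by
      have hle : ∀ t ∈ B, δ₀ ≤ t := by
        intro t ht
        by_contra hlt
        push_neg at hlt
        exact ht.2 (Set.Ioo_subset_Ioc_self
          (hgood0 (by rw [Real.dist_eq, sub_zero, abs_of_nonneg ht.1]; exact hlt)))
      linarith [le_csInf hBne hle]
    have hgoodlt : ∀ s : ℝ, 0 ≤ s → s < t₀ → y s ∈ Set.Ioc (0:ℝ) 1 := by
      intro s hs0 hs
      by_contra h
      exact absurd (csInf_le hBbdd ⟨hs0, h⟩) (not_le.2 hs)
    have hmem : y t₀ ∈ Set.Icc (0:ℝ) 1 := by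
      have hten : Filter.Tendsto y (nhdsWithin t₀ (Set.Iio t₀)) (nhds (y t₀)) :=
        ((hyc t₀ ht₀pos.le).continuousWithinAt).tendsto
      apply isClosed_Icc.mem_of_tendsto hten
      filter_upwards [Ioo_mem_nhdsLT_of_mem
        (show t₀ ∈ Set.Ioc (0:ℝ) t₀ from ⟨ht₀pos, le_rfl⟩)] with s hs
      exact Set.Ioc_subset_Icc_self (hgoodlt s hs.1.le hs.2)
    have hm := hmono 0 t₀ le_rfl (fun t ht => hnonneg _ (hgoodlt t ht.1.le ht.2))
    have hy0t₀ : y 0 ≤ y t₀ :=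
      hm (Set.left_mem_Icc.2 ht₀pos.le) (Set.right_mem_Icc.2 ht₀pos.le) ht₀pos.le
    have ht₀good : y t₀ ∈ Set.Ioc (0:ℝ) 1 := ⟨lt_of_lt_of_le hy0.1 hy0t₀, hmem.2⟩
    have hBgt : ∀ t ∈ B, t₀ < t := by
      intro t ht
      rcases lt_or_eq_of_le (csInf_le hBbdd ht) with h | h
      · exact h
      · exact absurd ht₀good (by rw [ht₀, h]; exact ht.2)
    have hyt₀1 : y t₀ = 1 := by
      by_contra hne
      have hoo : y t₀ ∈ Set.Ioo (0:ℝ) 1 := ⟨ht₀good.1, lt_of_le_of_ne ht₀good.2 hne⟩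
      obtain ⟨δ, hδ, hnear⟩ : ∃ δ > 0, ∀ ⦃t : ℝ⦄, dist t t₀ < δ → y t ∈ Set.Ioo (0:ℝ) 1 :=
        Metric.eventually_nhds_iff.1
          ((hyc t₀ ht₀pos.le).eventually_mem (isOpen_Ioo.mem_nhds hoo))
      obtain ⟨t, htB, htlt⟩ := (csInf_lt_iff hBbdd hBne).1
        (show sInf B < t₀ + δ by rw [← ht₀]; linarith)
      have h1 : t₀ < t := hBgt t htB
      exact htB.2 (Set.Ioo_subset_Ioc_self
        (hnear (by rw [Real.dist_eq, abs_of_nonneg (by linarith)]; linarith)))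
    have hoo : y t₀ ∈ Set.Ioo (0:ℝ) (1 + ε) := by
      rw [hyt₀1]; exact ⟨one_pos, by linarith⟩
    obtain ⟨δ, hδ, hnear⟩ : ∃ δ > 0, ∀ ⦃t : ℝ⦄, dist t t₀ < δ → y t ∈ Set.Ioo (0:ℝ) (1 + ε) :=
      Metric.eventually_nhds_iff.1
        ((hyc t₀ ht₀pos.le).eventually_mem (isOpen_Ioo.mem_nhds hoo))
    obtain ⟨t₁, ht₁B, ht₁lt⟩ := (csInf_lt_iff hBbdd hBne).1
      (show sInf B < t₀ + δ by rw [← ht₀]; linarith)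
    have ht₀t₁ : t₀ < t₁ := hBgt t₁ ht₁B
    have hyt₁pos : y t₁ ∈ Set.Ioo (0:ℝ) (1 + ε) :=
      hnear (by rw [Real.dist_eq, abs_of_nonneg (by linarith)]; linarith)
    have hy1 : 1 < y t₁ := by
      by_contra hle
      push_neg at hle
      exact ht₁B.2 ⟨hyt₁pos.1, hle⟩
    set S : Set ℝ := Set.Icc t₀ t₁ ∩ y ⁻¹' Set.Iic 1 with hSdef
    have hycontOn : ContinuousOn y (Set.Icc t₀ t₁) :=
      fun t ht => ((hyc t (le_trans ht₀pos.le ht.1)).continuousWithinAt)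
    have hSclosed : IsClosed S :=
      hycontOn.preimage_isClosed_of_isClosed isClosed_Icc isClosed_Iic
    have hSne : S.Nonempty := ⟨t₀, ⟨le_rfl, ht₀t₁.le⟩, by
      simp only [Set.mem_preimage, Set.mem_Iic, hyt₀1, le_refl]⟩
    have hSbdd : BddAbove S := ⟨t₁, fun t ht => ht.1.2⟩
    set s := sSup S with hs
    have hsS : s ∈ S := hSclosed.csSup_mem hSne hSbdd
    have hys1 : y s ≤ 1 := hsS.2
    have hst₁ : s < t₁ := lt_of_le_of_ne hsS.1.2
      (fun h => absurd (h ▸ hys1) (not_le.2 hy1))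
    have hup : ∀ t ∈ Set.Ioo s t₁, twoTypeH a11 a12 a21 a22 (y t) ≤ 0 := by
      intro t ht
      have hts : t₀ ≤ t := le_trans hsS.1.1 ht.1.le
      have h1t : 1 < y t := by
        by_contra hle
        push_neg at hle
        have : t ∈ S := ⟨⟨hts, ht.2.le⟩, hle⟩
        exact absurd (le_csSup hSbdd this) (not_le.2 ht.1)
      have h2t : y t < 1 + ε :=
        (hnear (by rw [Real.dist_eq, abs_of_nonneg (by linarith)]; linarith [ht.2])).2
      exact hneg (y t) h1t h2t.le
    have hA := hanti s t₁ (le_trans ht₀pos.le hsS.1.1) hup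
    have : y t₁ ≤ y s :=
      hA (Set.left_mem_Icc.2 hst₁.le) (Set.right_mem_Icc.2 hst₁.le) hst₁.le
    linarith
  -- global monotonicity
  have hmonoI : MonotoneOn y (Set.Ici (0:ℝ)) := by
    apply monotoneOn_of_deriv_nonneg (convex_Ici 0)
    · exact fun t ht => (hyc t ht).continuousWithinAt
    · intro t ht
      rw [interior_Ici] at ht
      exact ((hy t ht.le).differentiableAt).differentiableWithinAt
    · intro t ht
      rw [interior_Ici] at ht
      rw [(hy t ht.le).deriv]
      exact hnonneg _ (hinv t ht.le)
  set z : ℝ → ℝ := fun t => y (max t 0) with hz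
  have hzmono : Monotone z := fun a b hab =>
    hmonoI (Set.mem_Ici.2 (le_max_right a 0)) (Set.mem_Ici.2 (le_max_right b 0))
      (max_le_max hab le_rfl)
  have hzbdd : BddAbove (Set.range z) := ⟨1, by
    rintro _ ⟨t, rfl⟩
    exact (hinv _ (le_max_right t 0)).2⟩
  set L := ⨆ t, z t with hL
  have hzten : Filter.Tendsto z Filter.atTop (nhds L) := tendsto_atTop_ciSup hzmono hzbdd
  have hyz : y =ᶠ[Filter.atTop] z := by
    filter_upwards [Filter.eventually_ge_atTop (0:ℝ)] with t ht
    rw [hz]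
    simp [max_eq_left ht]
  have hyten : Filter.Tendsto y Filter.atTop (nhds L) := hzten.congr' hyz.symm
  have hL1 : L ≤ 1 := ciSup_le (fun t => (hinv _ (le_max_right t 0)).2)
  have hyleL : ∀ t : ℝ, 0 ≤ t → y t ≤ L := by
    intro t ht
    have h := le_ciSup hzbdd t
    rw [hz] at h
    simpa [max_eq_left ht] using h
  have hy0L : y 0 ≤ L := hyleL 0 le_rfl
  rcases eq_or_lt_of_le hL1 with h | h
  · rwa [h] at hyten
  · exfalso
    have hsub : Set.Icc (y 0) L ⊆ Set.Ioo (0:ℝ) 1 :=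
      fun u hu => ⟨lt_of_lt_of_le hy0.1 hu.1, lt_of_le_of_lt hu.2 h⟩
    have hHcont : ContinuousOn (twoTypeH a11 a12 a21 a22) (Set.Icc (y 0) L) := by
      intro u hu
      have hu' := hsub hu
      apply ContinuousAt.continuousWithinAt
      unfold twoTypeH
      apply ContinuousAt.mul
      apply ContinuousAt.mul
      apply ContinuousAt.sub
      · exact ContinuousAt.div continuousAt_const (by fun_prop) (hD1 u hu'.1.le).ne'
      · exact ContinuousAt.div continuousAt_const (by fun_prop) (hD2 u hu'.1.le).ne'
      · exact continuousAt_id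
      · fun_prop
    obtain ⟨u₀, hu₀mem, hu₀min⟩ :=
      isCompact_Icc.exists_isMinOn (Set.nonempty_Icc.2 hy0L) hHcont
    set m := twoTypeH a11 a12 a21 a22 u₀ with hm
    have hmpos : 0 < m := hpos u₀ (hsub hu₀mem)
    have hgmono : MonotoneOn (fun t => y t - m * t) (Set.Ici (0:ℝ)) := by
      apply monotoneOn_of_deriv_nonneg (convex_Ici 0)
      · exact ContinuousOn.sub (fun t ht => (hyc t ht).continuousWithinAt) (by fun_prop)
      · intro t ht
        rw [interior_Ici] at ht
        exact (((hy t ht.le).differentiableAt).sub (by fun_prop)).differentiableWithinAt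
      · intro t ht
        rw [interior_Ici] at ht
        have hd : HasDerivAt (fun t => y t - m * t)
            (twoTypeH a11 a12 a21 a22 (y t) - m) t := by
          exact ((hy t ht.le).sub ((hasDerivAt_id t).const_mul m)).congr_deriv (by ring)
        rw [hd.deriv]
        have hmemt : y t ∈ Set.Icc (y 0) L :=
          ⟨hmonoI (Set.mem_Ici.2 le_rfl) (Set.mem_Ici.2 ht.le) ht.le, hyleL t ht.le⟩
        linarith [isMinOn_iff.1 hu₀min (y t) hmemt]
    set T : ℝ := (1 - y 0) / m + 1 with hT
    have hTpos : 0 ≤ T := by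
      have h0 : 0 ≤ (1 - y 0) / m := div_nonneg (by linarith [hy0.2]) hmpos.le
      rw [hT]
      linarith
    have hgr := hgmono (Set.mem_Ici.2 le_rfl) (Set.mem_Ici.2 hTpos) hTpos
    have hmT : m * T = 1 - y 0 + m := by
      rw [hT]
      field_simp
    have hyT : y T ≤ 1 := (hinv T hTpos).2
    simp only [mul_zero, sub_zero] at hgr
    nlinarith
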